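/- For any positive integers m₁, …, mₙ and integers a₁, …, aₙ, r₁, …, rₙ: there exists an integer x such that mᵢ ∣ (aᵢ·x − rᵢ) for all i, if and only if (for all pairs i, j: gcd(aᵢ·mⱼ, aⱼ·mᵢ) ∣ (aᵢ·rⱼ − aⱼ·rᵢ)) and (for all i: gcd(aᵢ, mᵢ) ∣ rᵢ). -/

import Mathlib

lemma nat_gcd_lcm_distrib (a b c : ℕ) :
    Nat.gcd a (Nat.lcm b c) = Nat.lcm (Nat.gcd a b) (Nat.gcd a c) := by
  rcases eq_or_ne a 0 with rfl | ha
  · simp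
  rcases eq_or_ne b 0 with rfl | hb
  · simp only [Nat.lcm_zero_left, Nat.gcd_zero_right]
    exact Nat.dvd_antisymm (Nat.dvd_lcm_left _ _)
      (Nat.lcm_dvd dvd_rfl (Nat.gcd_dvd_left a c))
  rcases eq_or_ne c 0 with rfl | hc
  · simp only [Nat.lcm_zero_right, Nat.gcd_zero_right]
    exact Nat.dvd_antisymm (Nat.dvd_lcm_right _ _)
      (Nat.lcm_dvd (Nat.gcd_dvd_left a b) dvd_rfl)
  have hbc : Nat.lcm b c ≠ 0 := Nat.lcm_ne_zero hb hc
  have hab : Nat.gcd a b ≠ 0 := Nat.gcd_ne_zero_left ha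
  have hac : Nat.gcd a c ≠ 0 := Nat.gcd_ne_zero_left ha
  apply Nat.eq_of_factorization_eq (Nat.gcd_ne_zero_left ha) (Nat.lcm_ne_zero hab hac)
  intro p
  rw [Nat.factorization_gcd ha hbc, Nat.factorization_lcm hab hac,
    Nat.factorization_lcm hb hc, Nat.factorization_gcd ha hb, Nat.factorization_gcd ha hc]
  simp only [Finsupp.inf_apply, Finsupp.sup_apply]
  exact min_max_distrib_left _ _ _

lemma int_gcd_lcm_distrib (a b c : ℤ) : gcd a (lcm b c) = lcm (gcd a b) (gcd a c) := by
  have h1 : (0:ℤ) ≤ gcd a (lcm b c) := by rw [← Int.coe_gcd]; exact Int.natCast_nonneg _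
  have h2 : (0:ℤ) ≤ lcm (gcd a b) (gcd a c) := by rw [← Int.coe_lcm]; exact Int.natCast_nonneg _
  rw [← Int.natAbs_of_nonneg h1, ← Int.natAbs_of_nonneg h2]
  congr 1
  rw [Int.natAbs_gcd, Int.natAbs_lcm, Int.gcd_def, Int.lcm_def,
    Int.natAbs_lcm, Int.natAbs_gcd, Int.natAbs_gcd, Int.lcm_def, Int.gcd_def, Int.gcd_def]
  exact nat_gcd_lcm_distrib _ _ _

/-- Linear congruence `a*x ≡ r (mod b)` is solvable when `gcd a b ∣ r`. -/
lemma lin_cong_solvable {a b r : ℤ} (h : (Int.gcd a b : ℤ) ∣ r) :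
    ∃ x : ℤ, b ∣ a * x - r := by
  obtain ⟨k, hk⟩ := h
  refine ⟨Int.gcdA a b * k, ⟨-(Int.gcdB a b * k), ?_⟩⟩
  rw [hk]
  linear_combination (-k) * (Int.gcd_eq_gcd_ab a b)

lemma gcd_finset_lcm_dvd {ι : Type*} [DecidableEq ι] (s : Finset ι) (f : ι → ℤ) (a x : ℤ)
    (h : ∀ i ∈ s, gcd a (f i) ∣ x) : gcd a (s.lcm f) ∣ x := by
  induction s using Finset.induction_on with
  | empty => exact (dvd_of_eq (by simp)).trans (one_dvd x)
  | insert i s' hns ih =>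
    rw [Finset.lcm_insert, int_gcd_lcm_distrib]
    exact lcm_dvd (h i (Finset.mem_insert_self _ _))
      (ih fun j hj => h j (Finset.mem_insert_of_mem hj))

/-- General CRT for integers. -/
lemma crt : ∀ (n : ℕ) (c M : Fin n → ℤ),
    (∀ i j, (Int.gcd (M i) (M j) : ℤ) ∣ c i - c j) → ∃ x : ℤ, ∀ i, M i ∣ x - c i := by
  intro n
  induction n with
  | zero => exact fun c M _ => ⟨0, fun i => i.elim0⟩
  | succ n ih =>
    intro c M h
    obtain ⟨y, hy⟩ := ih (fun i => c i.succ) (fun i => M i.succ) (fun i j => h i.succ j.succ)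
    set L : ℤ := Finset.univ.lcm (fun i : Fin n => M i.succ) with hL
    have hgcd : gcd L (M 0) ∣ c 0 - y := by
      rw [gcd_comm]
      apply gcd_finset_lcm_dvd
      intro i _
      have h1 : gcd (M 0) (M i.succ) ∣ c 0 - c i.succ := by
        rw [← Int.coe_gcd]; exact h 0 i.succ
      have h2 : gcd (M 0) (M i.succ) ∣ y - c i.succ :=
        (gcd_dvd_right _ _).trans (hy i)
      have : c 0 - y = (c 0 - c i.succ) - (y - c i.succ) := by ring
      rw [this]
      exact dvd_sub h1 h2
    obtain ⟨s, hs⟩ := lin_cong_solvable (r := c 0 - y) (a := L) (b := M 0)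
      (by rwa [Int.coe_gcd])
    refine ⟨y + L * s, fun i => ?_⟩
    rcases Fin.eq_zero_or_eq_succ i with rfl | ⟨j, rfl⟩
    · have : y + L * s - c 0 = L * s - (c 0 - y) := by ring
      rw [this]; exact hs
    · have hdvd : M j.succ ∣ L := Finset.dvd_lcm (Finset.mem_univ j)
      have : y + L * s - c j.succ = (y - c j.succ) + L * s := by ring
      rw [this]
      exact dvd_add (hy j) (hdvd.mul_right s)

theorem generalized_CRT (n : ℕ) (m a r : Fin n → ℤ) (hm : ∀ i, 0 < m i) :
    (∃ x : ℤ, ∀ i, m i ∣ (a i * x - r i)) ↔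
      (∀ i j, (Int.gcd (a i * m j) (a j * m i) : ℤ) ∣ (a i * r j - a j * r i)) ∧
      (∀ i, (Int.gcd (a i) (m i) : ℤ) ∣ r i) := by
  constructor
  · rintro ⟨x, hx⟩
    constructor
    · intro i j
      have e : a i * r j - a j * r i = a i * (a j * x - r j) * (-1) - a j * (a i * x - r i) * (-1) := by
        ring
      rw [e]
      exact dvd_sub (((Int.gcd_dvd_left _ _).trans (mul_dvd_mul_left (a i) (hx j))).mul_right _)
        (((Int.gcd_dvd_right _ _).trans (mul_dvd_mul_left (a j) (hx i))).mul_right _)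
    · intro i
      have e : r i = a i * x - (a i * x - r i) := by ring
      rw [e]
      exact dvd_sub ((Int.gcd_dvd_left _ _).mul_right x) ((Int.gcd_dvd_right _ _).trans (hx i))
  · rintro ⟨h1, h2⟩
    set d : Fin n → ℤ := fun i => (Int.gcd (a i) (m i) : ℤ) with hd
    have hdposN : ∀ i, 0 < Int.gcd (a i) (m i) := fun i =>
      Int.gcd_pos_iff.mpr (Or.inr (hm i).ne')
    have hdpos : ∀ i, 0 < d i := fun i => by simp only [hd]; exact_mod_cast hdposN i
    set a' : Fin n → ℤ := fun i => a i / d i with ha'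
    set m' : Fin n → ℤ := fun i => m i / d i with hm'
    set r' : Fin n → ℤ := fun i => r i / d i with hr'
    have hA : ∀ i, a i = d i * a' i := fun i => (Int.mul_ediv_cancel' (Int.gcd_dvd_left _ _)).symm
    have hM : ∀ i, m i = d i * m' i := fun i => (Int.mul_ediv_cancel' (Int.gcd_dvd_right _ _)).symm
    have hR : ∀ i, r i = d i * r' i := fun i => (Int.mul_ediv_cancel' (h2 i)).symm
    have hcop : ∀ i, Int.gcd (a' i) (m' i) = 1 := fun i =>
      Int.gcd_div_gcd_div_gcd (hdposN i)
    have hsol : ∀ i, ∃ c, m' i ∣ a' i * c - r' i := fun i =>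
      lin_cong_solvable (by rw [hcop i]; exact one_dvd _)
    choose c hc using hsol
    -- key pairwise divisibility
    have hpair : ∀ i j, (Int.gcd (m' i) (m' j) : ℤ) ∣ c i - c j := by
      intro i j
      set g : ℤ := (Int.gcd (m' i) (m' j) : ℤ) with hg
      have hgi : g ∣ m' i := Int.gcd_dvd_left _ _
      have hgj : g ∣ m' j := Int.gcd_dvd_right _ _
      have hX : g ∣ a' i * r' j - a' j * r' i := by
        have key : (Int.gcd (a' i * m' j) (a' j * m' i) : ℤ) ∣ a' i * r' j - a' j * r' i := by
          have h11 := h1 i j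
          rw [hA i, hA j, hM i, hM j, hR i, hR j] at h11
          have e1 : d i * a' i * (d j * m' j) = (d i * d j) * (a' i * m' j) := by ring
          have e2 : d j * a' j * (d i * m' i) = (d i * d j) * (a' j * m' i) := by ring
          have e3 : d i * a' i * (d j * r' j) - d j * a' j * (d i * r' i)
              = (d i * d j) * (a' i * r' j - a' j * r' i) := by ring
          rw [e1, e2, e3, Int.gcd_mul_left] at h11
          have hdd : (0:ℤ) < d i * d j := mul_pos (hdpos i) (hdpos j)
          rw [Int.natCast_mul, Int.natAbs_of_nonneg hdd.le] at h11
          exact (mul_dvd_mul_iff_left hdd.ne').mp h11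
        exact (Int.dvd_coe_gcd (hgj.trans (dvd_mul_left _ _)) (hgi.trans (dvd_mul_left _ _))).trans key
      have hmul : g ∣ (a' i * a' j) * (c i - c j) := by
        have e : (a' i * a' j) * (c i - c j)
            = a' j * (a' i * c i - r' i) - a' i * (a' j * c j - r' j)
              - (a' i * r' j - a' j * r' i) := by ring
        rw [e]
        exact dvd_sub (dvd_sub ((hgi.trans (hc i)).mul_left _) ((hgj.trans (hc j)).mul_left _)) hX
      have hco : IsCoprime g (a' i * a' j) := by
        have ci : IsCoprime (a' i) (m' i) := Int.isCoprime_iff_gcd_eq_one.mpr (hcop i)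
        have cj : IsCoprime (a' j) (m' j) := Int.isCoprime_iff_gcd_eq_one.mpr (hcop j)
        exact (IsCoprime.mul_right ((ci.of_isCoprime_of_dvd_right hgi).symm)
          ((cj.of_isCoprime_of_dvd_right hgj).symm)).symm.symm
      exact hco.dvd_of_dvd_mul_left hmul
    obtain ⟨x, hx⟩ := crt n c m' hpair
    refine ⟨x, fun i => ?_⟩
    have e : a i * x - r i = d i * (a' i * (x - c i) + (a' i * c i - r' i)) := by
      rw [hA i, hR i]; ring
    rw [e, hM i]
    exact mul_dvd_mul_left (d i) (dvd_add ((hx i).mul_left _) (hc i))
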